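/- Let α = 157/531, β = 20/413, γ = 20/1239, and define R(n,s,x,y,f) = 2^(αs + β(x + (7/3)y − n/4) + γf) for real n, s, x, y, f. Let D = {(n,s,x,y,f) ∈ ℝ⁵ : s ≥ 0, f ≥ 0, and 3x + 7y ≥ (3/4)n}. Suppose T : ℝ⁵ → ℝ satisfies: T ≥ 0 everywhere; T(n,s,x,y,f) = 0 whenever (n,s,x,y,f) ∉ D; and for every (n,s,x,y,f) ∈ D, T(n,s,x,y,f) ≤ max{1, 2T(n,s−3,x−1,y,f−4), 2T(n,s−3,x,y−1,f), T(n,s−5,x,y,f−2)+T(n,s−2,x,y,f−2), 2T(n,s−4,x,y,f), T(n,s−4,x,y,f−2)+T(n,s−3,x,y,f−2)}. Then T(n,s,x,y,f) ≤ R(n,s,x,y,f) for every (n,s,x,y,f) ∈ D. -/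

import Mathlib

noncomputable def Eexp6 (n s x y f : ℝ) : ℝ :=
  (157 / 531 : ℝ) * s + (20 / 413 : ℝ) * (x + (7 / 3) * y - n / 4) + (20 / 1239 : ℝ) * f

lemma pow2_neg_le6 (p q a b : ℕ) (hq : q ≠ 0) (hb : 0 < b)
    (h : b ^ q ≤ a ^ q * 2 ^ p) : (2 : ℝ) ^ (-((p : ℝ) / q)) ≤ (a : ℝ) / b := by
  have hq' : (0:ℝ) < q := by positivity
  have hb' : (0:ℝ) < b := by exact_mod_cast hb
  apply le_of_pow_le_pow_left₀ hq (by positivity)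
  have key : ((2 : ℝ) ^ (-((p : ℝ) / q))) ^ q = (2 : ℝ) ^ (-(p : ℝ)) := by
    rw [← Real.rpow_natCast ((2:ℝ) ^ (-((p : ℝ) / q))) q, ← Real.rpow_mul (by norm_num)]
    congr 1
    field_simp
  rw [key, Real.rpow_neg (by norm_num), Real.rpow_natCast]
  have hcast : (b : ℝ) ^ q ≤ (a : ℝ) ^ q * 2 ^ p := by exact_mod_cast h
  rw [div_pow, inv_eq_one_div, div_le_div_iff₀ (by positivity) (by positivity)]
  nlinarith [hcast]

lemma sum_bound6 (E e1 e2 c1 c2 : ℝ) (h1 : (2:ℝ) ^ (-e1) ≤ c1) (h2 : (2:ℝ) ^ (-e2) ≤ c2)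
    (hc : c1 + c2 ≤ 1) :
    (2:ℝ) ^ (E - e1) + (2:ℝ) ^ (E - e2) ≤ (2:ℝ) ^ E := by
  have hE : (0:ℝ) < (2:ℝ) ^ E := Real.rpow_pos_of_pos two_pos E
  rw [sub_eq_add_neg, Real.rpow_add two_pos, sub_eq_add_neg E e2, Real.rpow_add two_pos]
  calc (2:ℝ)^E * 2^(-e1) + 2^E * 2^(-e2) = 2^E * (2^(-e1) + 2^(-e2)) := by ring
    _ ≤ 2^E * 1 := by
        apply mul_le_mul_of_nonneg_left (by linarith) hE.le
    _ = 2^E := mul_one _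

lemma c1_6 : (2:ℝ) ^ (-((5615:ℝ)/3717)) ≤ (350959:ℝ)/1000000 := by
  have := pow2_neg_le6 5615 3717 350959 1000000 (by norm_num) (by norm_num) (by decide +kernel)
  exact_mod_cast this

lemma c2_6 : (2:ℝ) ^ (-((2318:ℝ)/3717)) ≤ (649040:ℝ)/1000000 := by
  have := pow2_neg_le6 2318 3717 649040 1000000 (by norm_num) (by norm_num) (by decide +kernel)
  exact_mod_cast this

lemma c3_6 : (2:ℝ) ^ (-((4516:ℝ)/3717)) ≤ (44:ℝ)/100 := by
  have h1 : (2:ℝ) ^ (-((4516:ℝ)/3717)) ≤ (2:ℝ) ^ (-((6:ℝ)/5)) :=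
    Real.rpow_le_rpow_of_exponent_le one_le_two (by norm_num)
  have h2 := pow2_neg_le6 6 5 44 100 (by norm_num) (by norm_num) (by norm_num)
  calc (2:ℝ) ^ (-((4516:ℝ)/3717)) ≤ (2:ℝ) ^ (-((6:ℝ)/5)) := h1
    _ ≤ (44:ℝ)/100 := by exact_mod_cast h2

lemma c4_6 : (2:ℝ) ^ (-((3417:ℝ)/3717)) ≤ (56:ℝ)/100 := by
  have h1 : (2:ℝ) ^ (-((3417:ℝ)/3717)) ≤ (2:ℝ) ^ (-((9:ℝ)/10)) :=
    Real.rpow_le_rpow_of_exponent_le one_le_two (by norm_num)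
  have h2 := pow2_neg_le6 9 10 56 100 (by norm_num) (by norm_num) (by norm_num)
  calc (2:ℝ) ^ (-((3417:ℝ)/3717)) ≤ (2:ℝ) ^ (-((9:ℝ)/10)) := h1
    _ ≤ (56:ℝ)/100 := by exact_mod_cast h2

theorem stmt_6 (T : ℝ → ℝ → ℝ → ℝ → ℝ → ℝ)
    (hnonneg : ∀ n s x y f, 0 ≤ T n s x y f)
    (hout : ∀ n s x y f, ¬(0 ≤ s ∧ 0 ≤ f ∧ (3 / 4) * n ≤ 3 * x + 7 * y) →
      T n s x y f = 0)
    (hrec : ∀ n s x y f, (0 ≤ s ∧ 0 ≤ f ∧ (3 / 4) * n ≤ 3 * x + 7 * y) →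
      T n s x y f ≤
        max 1 (max (2 * T n (s - 3) (x - 1) y (f - 4))
          (max (2 * T n (s - 3) x (y - 1) f)
            (max (T n (s - 5) x y (f - 2) + T n (s - 2) x y (f - 2))
              (max (2 * T n (s - 4) x y f)
                (T n (s - 4) x y (f - 2) + T n (s - 3) x y (f - 2))))))) :
    ∀ n s x y f : ℝ, (0 ≤ s ∧ 0 ≤ f ∧ (3 / 4) * n ≤ 3 * x + 7 * y) →
      T n s x y f ≤
        (2 : ℝ) ^ ((157 / 531 : ℝ) * s + (20 / 413 : ℝ) * (x + (7 / 3) * y - n / 4) +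
          (20 / 1239 : ℝ) * f) := by
  suffices H : ∀ k : ℕ, ∀ n s x y f : ℝ, s ≤ -2 + 2 * k →
      (0 ≤ s ∧ 0 ≤ f ∧ (3 / 4) * n ≤ 3 * x + 7 * y) →
      T n s x y f ≤ (2:ℝ) ^ (Eexp6 n s x y f) by
    intro n s x y f hd
    obtain ⟨k, hk⟩ := exists_nat_ge ((s + 2) / 2)
    exact H k n s x y f (by linarith) hd
  intro k
  induction k with
  | zero =>
    intro n s x y f hs hd
    exfalso
    have := hd.1
    push_cast at hs
    linarith
  | succ k IH =>
    intro n s x y f hs hd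
    push_cast at hs
    have sub : ∀ (s' x' y' f' : ℝ), s' ≤ -2 + 2 * (k:ℝ) →
        T n s' x' y' f' ≤ (2:ℝ) ^ (Eexp6 n s' x' y' f') := by
      intro s' x' y' f' hs'
      by_cases hd' : (0 ≤ s' ∧ 0 ≤ f' ∧ (3 / 4) * n ≤ 3 * x' + 7 * y')
      · exact IH n s' x' y' f' (by push_cast; linarith) hd'
      · rw [hout n s' x' y' f' hd']
        positivity
    refine (hrec n s x y f hd).trans ?_
    obtain ⟨hs0, hf0, hxy⟩ := hd
    show _ ≤ (2:ℝ) ^ (Eexp6 n s x y f)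
    apply max_le
    · calc (1:ℝ) = (2:ℝ) ^ (0:ℝ) := (Real.rpow_zero 2).symm
        _ ≤ (2:ℝ) ^ (Eexp6 n s x y f) := by
            apply Real.rpow_le_rpow_of_exponent_le one_le_two
            unfold Eexp6; nlinarith
    apply max_le
    · -- arm 1
      have h := sub (s - 3) (x - 1) y (f - 4) (by linarith)
      calc 2 * T n (s - 3) (x - 1) y (f - 4) ≤ 2 * (2:ℝ) ^ (Eexp6 n (s-3) (x-1) y (f-4)) := by
            linarith
        _ = (2:ℝ) ^ (1 + Eexp6 n (s-3) (x-1) y (f-4)) := by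
            rw [Real.rpow_add two_pos, Real.rpow_one]
        _ ≤ (2:ℝ) ^ (Eexp6 n s x y f) := by
            apply Real.rpow_le_rpow_of_exponent_le one_le_two
            unfold Eexp6; ring_nf; nlinarith
    apply max_le
    · -- arm 2
      have h := sub (s - 3) x (y - 1) f (by linarith)
      calc 2 * T n (s - 3) x (y - 1) f ≤ 2 * (2:ℝ) ^ (Eexp6 n (s-3) x (y-1) f) := by
            linarith
        _ = (2:ℝ) ^ (1 + Eexp6 n (s-3) x (y-1) f) := by
            rw [Real.rpow_add two_pos, Real.rpow_one]
        _ ≤ (2:ℝ) ^ (Eexp6 n s x y f) := by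
            apply Real.rpow_le_rpow_of_exponent_le one_le_two
            unfold Eexp6; ring_nf; nlinarith
    apply max_le
    · -- arm 3
      have h1 := sub (s - 5) x y (f - 2) (by linarith)
      have h2 := sub (s - 2) x y (f - 2) (by linarith)
      have e1 : Eexp6 n (s-5) x y (f-2) = Eexp6 n s x y f - (5615:ℝ)/3717 := by
        unfold Eexp6; ring
      have e2 : Eexp6 n (s-2) x y (f-2) = Eexp6 n s x y f - (2318:ℝ)/3717 := by
        unfold Eexp6; ring
      rw [e1] at h1; rw [e2] at h2
      have := sum_bound6 (Eexp6 n s x y f) ((5615:ℝ)/3717) ((2318:ℝ)/3717)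
        ((350959:ℝ)/1000000) ((649040:ℝ)/1000000) c1_6 c2_6 (by norm_num)
      linarith
    apply max_le
    · -- arm 4
      have h := sub (s - 4) x y f (by linarith)
      calc 2 * T n (s - 4) x y f ≤ 2 * (2:ℝ) ^ (Eexp6 n (s-4) x y f) := by linarith
        _ = (2:ℝ) ^ (1 + Eexp6 n (s-4) x y f) := by
            rw [Real.rpow_add two_pos, Real.rpow_one]
        _ ≤ (2:ℝ) ^ (Eexp6 n s x y f) := by
            apply Real.rpow_le_rpow_of_exponent_le one_le_two
            unfold Eexp6; ring_nf; nlinarith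
    · -- arm 5
      have h1 := sub (s - 4) x y (f - 2) (by linarith)
      have h2 := sub (s - 3) x y (f - 2) (by linarith)
      have e1 : Eexp6 n (s-4) x y (f-2) = Eexp6 n s x y f - (4516:ℝ)/3717 := by
        unfold Eexp6; ring
      have e2 : Eexp6 n (s-3) x y (f-2) = Eexp6 n s x y f - (3417:ℝ)/3717 := by
        unfold Eexp6; ring
      rw [e1] at h1; rw [e2] at h2
      have := sum_bound6 (Eexp6 n s x y f) ((4516:ℝ)/3717) ((3417:ℝ)/3717)
        ((44:ℝ)/100) ((56:ℝ)/100) c3_6 c4_6 (by norm_num)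
      linarith
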